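/- The Funk metric Θ(x,y) = (√(|y|² − (|x|²|y|² − ⟨x,y⟩²)) + ⟨x,y⟩)/(1 − |x|²) on the unit ball of ℝⁿ satisfies the Funk equations Θ_{x^k} = Θ·Θ_{y^k} for all k, at all points with |x| < 1 and y ≠ 0. -/

import Mathlib

noncomputable def pdx {n : ℕ} (F : (Fin n → ℝ) → (Fin n → ℝ) → ℝ) (k : Fin n)
    (x y : Fin n → ℝ) : ℝ := fderiv ℝ (fun x' => F x' y) x (Pi.single k 1)

noncomputable def pdy {n : ℕ} (F : (Fin n → ℝ) → (Fin n → ℝ) → ℝ) (k : Fin n)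
    (x y : Fin n → ℝ) : ℝ := fderiv ℝ (fun y' => F x y') y (Pi.single k 1)

/-- Squared Euclidean norm on `ℝⁿ`. -/
def nsq {n : ℕ} (x : Fin n → ℝ) : ℝ := ∑ i, x i ^ 2

/-- Euclidean inner product on `ℝⁿ`. -/
def dotp {n : ℕ} (x y : Fin n → ℝ) : ℝ := ∑ i, x i * y i

/-- The Funk metric of the Euclidean norm on the unit ball. -/
noncomputable def FunkBall {n : ℕ} (x y : Fin n → ℝ) : ℝ :=
  (Real.sqrt (nsq y - (nsq x * nsq y - dotp x y ^ 2)) + dotp x y) / (1 - nsq x)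

/- auxiliary lemmas -/

lemma aux_line (n : ℕ) (x e : Fin n → ℝ) : HasDerivAt (fun t : ℝ => x + t • e) e 0 := by
  have h := ((hasDerivAt_id (0:ℝ)).smul_const e).const_add x
  simpa using h

lemma aux_nsq_diff (n : ℕ) (x : Fin n → ℝ) : DifferentiableAt ℝ (nsq (n := n)) x := by
  have : (nsq (n := n)) = fun x : Fin n → ℝ => ∑ i, x i ^ 2 := rfl
  rw [this]
  exact DifferentiableAt.fun_sum fun i _ =>
    ((ContinuousLinearMap.proj (R := ℝ) (φ := fun _ : Fin n => ℝ) i).differentiableAt).pow 2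

lemma aux_dotp_diff_left (n : ℕ) (y x : Fin n → ℝ) :
    DifferentiableAt ℝ (fun x' => dotp x' y) x := by
  have : (fun x' : Fin n → ℝ => dotp x' y) = fun x' => ∑ i, x' i * y i := rfl
  rw [this]
  exact DifferentiableAt.fun_sum fun i _ =>
    ((ContinuousLinearMap.proj (R := ℝ) (φ := fun _ : Fin n => ℝ) i).differentiableAt).mul_const (y i)

lemma aux_dotp_diff_right (n : ℕ) (x y : Fin n → ℝ) :
    DifferentiableAt ℝ (fun y' => dotp x y') y := by
  have : (fun y' : Fin n → ℝ => dotp x y') = fun y' => ∑ i, x i * y' i := rfl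
  rw [this]
  exact DifferentiableAt.fun_sum fun i _ =>
    ((ContinuousLinearMap.proj (R := ℝ) (φ := fun _ : Fin n => ℝ) i).differentiableAt).const_mul (x i)

lemma aux_nsq_line (n : ℕ) (x : Fin n → ℝ) (k : Fin n) :
    HasDerivAt (fun t : ℝ => nsq (x + t • (Pi.single k 1 : Fin n → ℝ))) (2 * x k) 0 := by
  have h : ∀ i : Fin n, HasDerivAt
      (fun t : ℝ => (x i + t * (Pi.single k 1 : Fin n → ℝ) i) ^ 2)
      (2 * x i * (Pi.single k 1 : Fin n → ℝ) i) 0 := by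
    intro i
    have hi : HasDerivAt (fun t : ℝ => x i + t * (Pi.single k 1 : Fin n → ℝ) i)
        ((Pi.single k 1 : Fin n → ℝ) i) 0 := by
      simpa using ((hasDerivAt_id (0:ℝ)).mul_const ((Pi.single k 1 : Fin n → ℝ) i)).const_add (x i)
    have := hi.fun_pow 2
    exact this.congr_deriv (by norm_num)
  have hsum := HasDerivAt.fun_sum (u := Finset.univ) (fun i _ => h i)
  have heq : (fun t : ℝ => ∑ i, (x i + t * (Pi.single k 1 : Fin n → ℝ) i) ^ 2)
      = fun t : ℝ => nsq (x + t • (Pi.single k 1 : Fin n → ℝ)) := by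
    funext t
    simp [nsq]
  rw [heq] at hsum
  exact hsum.congr_deriv (by simp [Pi.single_apply, mul_ite])

lemma aux_dotp_line_left (n : ℕ) (x y : Fin n → ℝ) (k : Fin n) :
    HasDerivAt (fun t : ℝ => dotp (x + t • (Pi.single k 1 : Fin n → ℝ)) y) (y k) 0 := by
  have h : ∀ i : Fin n, HasDerivAt
      (fun t : ℝ => (x i + t * (Pi.single k 1 : Fin n → ℝ) i) * y i)
      ((Pi.single k 1 : Fin n → ℝ) i * y i) 0 := by
    intro i
    have hi : HasDerivAt (fun t : ℝ => x i + t * (Pi.single k 1 : Fin n → ℝ) i)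
        ((Pi.single k 1 : Fin n → ℝ) i) 0 := by
      simpa using ((hasDerivAt_id (0:ℝ)).mul_const ((Pi.single k 1 : Fin n → ℝ) i)).const_add (x i)
    exact hi.mul_const (y i)
  have hsum := HasDerivAt.fun_sum (u := Finset.univ) (fun i _ => h i)
  have heq : (fun t : ℝ => ∑ i, (x i + t * (Pi.single k 1 : Fin n → ℝ) i) * y i)
      = fun t : ℝ => dotp (x + t • (Pi.single k 1 : Fin n → ℝ)) y := by
    funext t
    simp [dotp]
  rw [heq] at hsum
  exact hsum.congr_deriv (by simp [Pi.single_apply, ite_mul])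

lemma aux_dotp_line_right (n : ℕ) (x y : Fin n → ℝ) (k : Fin n) :
    HasDerivAt (fun t : ℝ => dotp x (y + t • (Pi.single k 1 : Fin n → ℝ))) (x k) 0 := by
  have h : ∀ i : Fin n, HasDerivAt
      (fun t : ℝ => x i * (y i + t * (Pi.single k 1 : Fin n → ℝ) i))
      (x i * (Pi.single k 1 : Fin n → ℝ) i) 0 := by
    intro i
    have hi : HasDerivAt (fun t : ℝ => y i + t * (Pi.single k 1 : Fin n → ℝ) i)
        ((Pi.single k 1 : Fin n → ℝ) i) 0 := by
      simpa using ((hasDerivAt_id (0:ℝ)).mul_const ((Pi.single k 1 : Fin n → ℝ) i)).const_add (y i)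
    exact hi.const_mul (x i)
  have hsum := HasDerivAt.fun_sum (u := Finset.univ) (fun i _ => h i)
  have heq : (fun t : ℝ => ∑ i, x i * (y i + t * (Pi.single k 1 : Fin n → ℝ) i))
      = fun t : ℝ => dotp x (y + t • (Pi.single k 1 : Fin n → ℝ)) := by
    funext t
    simp [dotp]
  rw [heq] at hsum
  exact hsum.congr_deriv (by simp [Pi.single_apply, mul_ite])

lemma aux_hasDerivAt_x (n : ℕ) (x y : Fin n → ℝ) (k : Fin n)
    (hA : nsq y - (nsq x * nsq y - dotp x y ^ 2) ≠ 0) (hden : 1 - nsq x ≠ 0) :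
    HasDerivAt (fun t : ℝ => FunkBall (x + t • (Pi.single k 1 : Fin n → ℝ)) y)
      ((((2 * dotp x y * y k - 2 * x k * nsq y) /
          (2 * Real.sqrt (nsq y - (nsq x * nsq y - dotp x y ^ 2))) + y k) * (1 - nsq x)
        - (Real.sqrt (nsq y - (nsq x * nsq y - dotp x y ^ 2)) + dotp x y) * (0 - 2 * x k))
        / (1 - nsq x) ^ 2) 0 := by
  have hq := aux_nsq_line n x k
  have hp := aux_dotp_line_left n x y k
  have hA' : HasDerivAt
      (fun t : ℝ => nsq y - (nsq (x + t • (Pi.single k 1 : Fin n → ℝ)) * nsq y -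
        dotp (x + t • (Pi.single k 1 : Fin n → ℝ)) y ^ 2))
      (2 * dotp x y * y k - 2 * x k * nsq y) 0 := by
    have h := (hasDerivAt_const (0:ℝ) (nsq y)).sub ((hq.mul_const (nsq y)).sub (hp.fun_pow 2))
    exact h.congr_deriv (by simp)
  have hA0 : nsq y - (nsq (x + (0:ℝ) • (Pi.single k 1 : Fin n → ℝ)) * nsq y -
      dotp (x + (0:ℝ) • (Pi.single k 1 : Fin n → ℝ)) y ^ 2) ≠ 0 := by simpa using hA
  have hsq := hA'.sqrt hA0
  have hden' : HasDerivAt (fun t : ℝ => 1 - nsq (x + t • (Pi.single k 1 : Fin n → ℝ)))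
      (0 - 2 * x k) 0 := (hasDerivAt_const (0:ℝ) (1:ℝ)).sub hq
  have hden0 : (1:ℝ) - nsq (x + (0:ℝ) • (Pi.single k 1 : Fin n → ℝ)) ≠ 0 := by simpa using hden
  have H := (hsq.add hp).div hden' hden0
  simp only [FunkBall]
  exact H.congr_deriv (by simp)
lemma aux_hasDerivAt_y (n : ℕ) (x y : Fin n → ℝ) (k : Fin n)
    (hA : nsq y - (nsq x * nsq y - dotp x y ^ 2) ≠ 0) :
    HasDerivAt (fun t : ℝ => FunkBall x (y + t • (Pi.single k 1 : Fin n → ℝ)))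
      (((2 * y k - (nsq x * (2 * y k) - 2 * dotp x y * x k)) /
          (2 * Real.sqrt (nsq y - (nsq x * nsq y - dotp x y ^ 2))) + x k) / (1 - nsq x)) 0 := by
  have hq := aux_nsq_line n y k
  have hp := aux_dotp_line_right n x y k
  have hA' : HasDerivAt
      (fun t : ℝ => nsq (y + t • (Pi.single k 1 : Fin n → ℝ)) -
        (nsq x * nsq (y + t • (Pi.single k 1 : Fin n → ℝ)) -
          dotp x (y + t • (Pi.single k 1 : Fin n → ℝ)) ^ 2))
      (2 * y k - (nsq x * (2 * y k) - 2 * dotp x y * x k)) 0 := by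
    have h := hq.sub ((hq.const_mul (nsq x)).sub (hp.fun_pow 2))
    exact h.congr_deriv (by simp)
  have hA0 : nsq (y + (0:ℝ) • (Pi.single k 1 : Fin n → ℝ)) -
      (nsq x * nsq (y + (0:ℝ) • (Pi.single k 1 : Fin n → ℝ)) -
        dotp x (y + (0:ℝ) • (Pi.single k 1 : Fin n → ℝ)) ^ 2) ≠ 0 := by simpa using hA
  have H := (hA'.sqrt hA0).add hp |>.div_const (1 - nsq x)
  simp only [FunkBall]
  exact H.congr_deriv (by simp)

theorem stmt_7 (n : ℕ) (x y : Fin n → ℝ) (hx : nsq x < 1) (hy : y ≠ 0) (k : Fin n) :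
    pdx (FunkBall (n := n)) k x y = FunkBall x y * pdy (FunkBall (n := n)) k x y := by
  classical
  have hY : 0 < nsq y := by
    obtain ⟨i, hi⟩ : ∃ i, y i ≠ 0 := by
      by_contra h; push_neg at h; exact hy (funext h)
    have h1 : y i ^ 2 ≤ nsq y :=
      Finset.single_le_sum (f := fun j => y j ^ 2) (fun j _ => sq_nonneg _) (Finset.mem_univ i)
    have h2 : 0 < y i ^ 2 := by positivity
    linarith
  have hApos : 0 < nsq y - (nsq x * nsq y - dotp x y ^ 2) := by
    nlinarith [sq_nonneg (dotp x y)]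
  have hAne : nsq y - (nsq x * nsq y - dotp x y ^ 2) ≠ 0 := ne_of_gt hApos
  have hden : (1:ℝ) - nsq x ≠ 0 := by linarith
  -- differentiability in x
  have hdiffx : DifferentiableAt ℝ (fun x' => FunkBall x' y) x := by
    simp only [FunkBall]
    have h1 := aux_nsq_diff n x
    have h2 := aux_dotp_diff_left n y x
    have hAd : DifferentiableAt ℝ
        (fun x' : Fin n → ℝ => nsq y - (nsq x' * nsq y - dotp x' y ^ 2)) x :=
      (differentiableAt_const _).sub ((h1.mul_const _).sub (h2.pow 2))
    simp only [div_eq_mul_inv]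
    exact ((hAd.sqrt hAne).add h2).mul (((differentiableAt_const (1:ℝ)).sub h1).inv hden)
  have hdiffy : DifferentiableAt ℝ (fun y' => FunkBall x y') y := by
    simp only [FunkBall]
    have h1 := aux_nsq_diff n y
    have h2 := aux_dotp_diff_right n x y
    have hAd : DifferentiableAt ℝ
        (fun y' : Fin n → ℝ => nsq y' - (nsq x * nsq y' - dotp x y' ^ 2)) y :=
      h1.sub ((h1.const_mul (nsq x)).sub (h2.pow 2))
    simp only [div_eq_mul_inv]
    exact ((hAd.sqrt hAne).add h2).mul_const _
  -- identify pdx with the line derivative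
  have hFx : HasFDerivAt (fun x' => FunkBall x' y) (fderiv ℝ (fun x' => FunkBall x' y) x)
      ((fun t : ℝ => x + t • (Pi.single k 1 : Fin n → ℝ)) 0) := by
    simpa using hdiffx.hasFDerivAt
  have hcompx : HasDerivAt (fun t : ℝ => FunkBall (x + t • (Pi.single k 1 : Fin n → ℝ)) y)
      (fderiv ℝ (fun x' => FunkBall x' y) x (Pi.single k 1)) 0 :=
    by have := hFx.comp_hasDerivAt 0 (aux_line n x (Pi.single k 1)); exact this
  have hFy : HasFDerivAt (fun y' => FunkBall x y') (fderiv ℝ (fun y' => FunkBall x y') y)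
      ((fun t : ℝ => y + t • (Pi.single k 1 : Fin n → ℝ)) 0) := by
    simpa using hdiffy.hasFDerivAt
  have hcompy : HasDerivAt (fun t : ℝ => FunkBall x (y + t • (Pi.single k 1 : Fin n → ℝ)))
      (fderiv ℝ (fun y' => FunkBall x y') y (Pi.single k 1)) 0 :=
    by have := hFy.comp_hasDerivAt 0 (aux_line n y (Pi.single k 1)); exact this
  have hx1 := hcompx.unique (aux_hasDerivAt_x n x y k hAne hden)
  have hy1 := hcompy.unique (aux_hasDerivAt_y n x y k hAne)
  unfold pdx pdy
  rw [hx1, hy1]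
  -- algebra
  set s := Real.sqrt (nsq y - (nsq x * nsq y - dotp x y ^ 2)) with hs
  have hspos : 0 < s := Real.sqrt_pos.mpr hApos
  have hs2 : s ^ 2 = nsq y - (nsq x * nsq y - dotp x y ^ 2) := Real.sq_sqrt hApos.le
  have hsne : s ≠ 0 := ne_of_gt hspos
  simp only [FunkBall, ← hs]
  field_simp
  linear_combination (x k) * hs2
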